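/- Let A be a unital C*-algebra, let q be a real number with 0 < q < 1, and let p, r, t ∈ A satisfy p* = p, t*·t = q⁻⁴(p − p²), and r*·r = q⁻⁴p² − (1+q⁻⁴)p + 1. Then ‖t‖ ≤ q⁻²/2 and ‖r‖² ≤ 2(1 + q⁻⁴). -/

import Mathlib

/-- In a unital C*-algebra, if `p* = p`, `t* t = q⁻⁴ (p - p²)` and
`r* r = q⁻⁴ p² - (1 + q⁻⁴) p + 1` for some `0 < q < 1`, then `‖t‖ ≤ q⁻²/2` and
`‖r‖² ≤ 2 (1 + q⁻⁴)`. -/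
theorem stmt9 {A : Type*} [NormedRing A] [StarRing A] [CStarRing A] [CompleteSpace A]
    [NormedAlgebra ℂ A] [StarModule ℂ A] (q : ℝ) (hq0 : 0 < q) (hq1 : q < 1)
    (p r t : A) (hp : star p = p)
    (ht : star t * t = (((q : ℂ) ^ 4)⁻¹) • (p - p * p))
    (hr : star r * r =
      (((q : ℂ) ^ 4)⁻¹) • (p * p) - (1 + ((q : ℂ) ^ 4)⁻¹) • p + 1) :
    ‖t‖ ≤ (q ^ 2)⁻¹ / 2 ∧ ‖r‖ ^ 2 ≤ 2 * (1 + (q ^ 4)⁻¹) := by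
  letI : CStarAlgebra A := {}
  letI := CStarAlgebra.spectralOrder A
  haveI := CStarAlgebra.spectralOrderedRing A
  have hq4 : (0:ℝ) < q ^ 4 := by positivity
  -- convert complex smuls to real smuls
  have hcoe : (((q : ℂ) ^ 4)⁻¹) = ((((q^4)⁻¹ : ℝ) : ℂ)) := by push_cast; ring
  have hsmul : ∀ x : A, (((q : ℂ) ^ 4)⁻¹) • x = ((q ^ 4)⁻¹ : ℝ) • x := fun x => by
    rw [hcoe, Complex.coe_smul]
  obtain hA | hA := subsingleton_or_nontrivial A
  · have h1 : ‖t‖ = 0 := by rw [Subsingleton.elim t 0, norm_zero]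
    have h2 : ‖r‖ = 0 := by rw [Subsingleton.elim r 0, norm_zero]
    constructor
    · rw [h1]; positivity
    · rw [h2]; norm_num; positivity
  have hsa : IsSelfAdjoint p := hp
  have hsa2 : IsSelfAdjoint (p * p) := by simp [IsSelfAdjoint, star_mul, hp]
  -- p - p*p is nonneg
  have key : p - p * p = star ((q^2 : ℝ) • t) * ((q^2 : ℝ) • t) := by
    rw [star_smul, star_trivial, smul_mul_smul_comm, ht, hsmul, smul_smul]
    rw [show (q^2 : ℝ) * q^2 * (q^4)⁻¹ = 1 by field_simp, one_smul]
  have hpos : (0:A) ≤ p - p * p := key ▸ star_mul_self_nonneg _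
  -- spectrum of p is in [0,1]
  have hcfc : cfc (fun x : ℝ => x - x * x) p = p - p * p := by
    rw [cfc_sub _ _ p (by fun_prop) (by fun_prop), cfc_id' ℝ p, cfc_mul _ _ p (by fun_prop) (by fun_prop), cfc_id' ℝ p]
  have hspec : ∀ x ∈ spectrum ℝ p, 0 ≤ x ∧ x ≤ 1 := by
    intro x hx
    have hmem : x - x * x ∈ spectrum ℝ (p - p * p) := by
      rw [← hcfc, cfc_map_spectrum (fun x : ℝ => x - x * x) p]
      exact ⟨x, hx, rfl⟩
    have h0 : 0 ≤ x - x * x :=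
      (StarOrderedRing.nonneg_iff_spectrum_nonneg (R := ℝ) _ (hsa.sub hsa2)).mp
        hpos _ hmem
    constructor <;> nlinarith
  have hppos : (0:A) ≤ p :=
    (StarOrderedRing.nonneg_iff_spectrum_nonneg (R := ℝ) p hsa).mpr fun x hx => (hspec x hx).1
  have hpnorm : ‖p‖ ≤ 1 := by
    rw [CStarAlgebra.norm_le_one_iff_of_nonneg p hppos, ← map_one (algebraMap ℝ A),
      le_algebraMap_iff_spectrum_le]
    exact fun x hx => (hspec x hx).2
  have hqnorm : ‖p - p * p‖ ≤ 1/4 := by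
    rw [CStarAlgebra.norm_le_iff_le_algebraMap _ (by norm_num) hpos,
      le_algebraMap_iff_spectrum_le (ha := hsa.sub hsa2)]
    intro x hx
    rw [← hcfc, cfc_map_spectrum (fun x : ℝ => x - x * x) p] at hx
    obtain ⟨y, hy, rfl⟩ := hx
    obtain ⟨h1, h2⟩ := hspec y hy
    show y - y * y ≤ 1/4
    nlinarith [sq_nonneg (y - 1/2)]
  constructor
  · have h1 : ‖t‖ * ‖t‖ = ‖star t * t‖ := (CStarRing.norm_star_mul_self).symm
    rw [ht, hsmul, norm_smul, Real.norm_eq_abs, abs_of_pos (by positivity)] at h1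
    have h2 : ‖t‖ * ‖t‖ ≤ (q^4)⁻¹ * (1/4) := by
      rw [h1]; exact mul_le_mul_of_nonneg_left hqnorm (by positivity)
    have hc : 0 < (q^2)⁻¹/2 := by positivity
    have hcc : (q^4)⁻¹ * (1/4) = ((q^2)⁻¹/2) * ((q^2)⁻¹/2) := by field_simp; ring
    rw [hcc] at h2
    nlinarith [norm_nonneg t, h2, hc]
  · have h1 : ‖r‖ ^ 2 = ‖star r * r‖ := by
      rw [sq]; exact (CStarRing.norm_star_mul_self).symm
    rw [hr] at h1
    have h2 : ((1:ℂ) + ((q : ℂ) ^ 4)⁻¹) • p = ((1 + (q^4)⁻¹ : ℝ)) • p := by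
      rw [show ((1:ℂ) + ((q : ℂ) ^ 4)⁻¹) = (((1 + (q^4)⁻¹ : ℝ)) : ℂ) by push_cast; ring,
        Complex.coe_smul]
    rw [hsmul, h2] at h1
    have hpp : ‖p * p‖ ≤ 1 := by
      calc ‖p * p‖ ≤ ‖p‖ * ‖p‖ := norm_mul_le p p
      _ ≤ 1 := by nlinarith [norm_nonneg p]
    have htri : ‖((q^4)⁻¹ : ℝ) • (p * p) - ((1 + (q^4)⁻¹ : ℝ)) • p + 1‖ ≤
        (q^4)⁻¹ * 1 + (1 + (q^4)⁻¹) * 1 + 1 := by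
      refine le_trans (norm_add_le _ _) ?_
      have := norm_sub_le (((q^4)⁻¹ : ℝ) • (p * p)) (((1 + (q^4)⁻¹ : ℝ)) • p)
      have e1 : ‖((q^4)⁻¹ : ℝ) • (p * p)‖ ≤ (q^4)⁻¹ * 1 := by
        rw [norm_smul, Real.norm_eq_abs, abs_of_pos (by positivity)]
        exact mul_le_mul_of_nonneg_left hpp (by positivity)
      have e2 : ‖((1 + (q^4)⁻¹ : ℝ)) • p‖ ≤ (1 + (q^4)⁻¹) * 1 := by
        rw [norm_smul, Real.norm_eq_abs, abs_of_pos (by positivity)]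
        exact mul_le_mul_of_nonneg_left hpnorm (by positivity)
      have e3 : ‖(1:A)‖ = 1 := norm_one
      linarith
    rw [h1]; linarith
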